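/- Let c ∈ ℝⁿ, m ∈ ℝⁿ, M ∈ ℝⁿˣⁿ, ρ ≥ 0. Consider minimizing 2Σᵢ cᵢ (e¹)ᵀvⁱ over v¹,...,vⁿ ∈ ℝᵖ subject to (e¹)ᵀvⁱ ≥ 0 for all i and Σⱼ ‖mⱼe¹ + Σᵢ Mᵢⱼ vⁱ‖₂² ≤ ρ². If this problem has an optimal solution, then it has an optimal solution (v¹)*,...,(vⁿ)* in which every (vⁱ)* is a scalar multiple of e¹. -/

import Mathlib

open Finset

lemma proj_norm_sq_le {p : ℕ} (x : EuclideanSpace ℝ (Fin (p + 1))) :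
    ‖((x 0) • (EuclideanSpace.single 0 1 : EuclideanSpace ℝ (Fin (p + 1))))‖ ^ 2 ≤ ‖x‖ ^ 2 := by
  have h1 : ‖((x 0) • (EuclideanSpace.single 0 1 : EuclideanSpace ℝ (Fin (p + 1))))‖
      = |x 0| := by
    rw [norm_smul, EuclideanSpace.norm_single]
    simp
  have h2 : ‖x‖ ^ 2 = ∑ k, (x k) ^ 2 := by
    rw [EuclideanSpace.norm_eq, Real.sq_sqrt (by positivity)]
    simp [sq_abs]
  rw [h1, sq_abs, h2]
  exact Finset.single_le_sum (f := fun k => (x k) ^ 2) (fun k _ => sq_nonneg _)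
    (Finset.mem_univ 0)

theorem first_stage_ellipsoid_collinear_optimum {p n : ℕ}
    (c m : Fin n → ℝ) (M : Matrix (Fin n) (Fin n) ℝ) (ρ : ℝ) (hρ : 0 ≤ ρ)
    (hopt : ∃ v : Fin n → EuclideanSpace ℝ (Fin (p + 1)),
      ((∀ i, 0 ≤ v i 0) ∧
        ∑ j, ‖(m j) • (EuclideanSpace.single 0 1 : EuclideanSpace ℝ (Fin (p + 1))) +
          ∑ i, (M i j) • v i‖ ^ 2 ≤ ρ ^ 2) ∧
      ∀ w : Fin n → EuclideanSpace ℝ (Fin (p + 1)),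
        ((∀ i, 0 ≤ w i 0) ∧
          ∑ j, ‖(m j) • (EuclideanSpace.single 0 1 : EuclideanSpace ℝ (Fin (p + 1))) +
            ∑ i, (M i j) • w i‖ ^ 2 ≤ ρ ^ 2) →
        2 * ∑ i, c i * v i 0 ≤ 2 * ∑ i, c i * w i 0) :
    ∃ v : Fin n → EuclideanSpace ℝ (Fin (p + 1)),
      ((∀ i, 0 ≤ v i 0) ∧
        ∑ j, ‖(m j) • (EuclideanSpace.single 0 1 : EuclideanSpace ℝ (Fin (p + 1))) +
          ∑ i, (M i j) • v i‖ ^ 2 ≤ ρ ^ 2) ∧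
      (∀ w : Fin n → EuclideanSpace ℝ (Fin (p + 1)),
        ((∀ i, 0 ≤ w i 0) ∧
          ∑ j, ‖(m j) • (EuclideanSpace.single 0 1 : EuclideanSpace ℝ (Fin (p + 1))) +
            ∑ i, (M i j) • w i‖ ^ 2 ≤ ρ ^ 2) →
        2 * ∑ i, c i * v i 0 ≤ 2 * ∑ i, c i * w i 0) ∧
      ∀ i, ∃ t : ℝ, v i = t • (EuclideanSpace.single 0 1 : EuclideanSpace ℝ (Fin (p + 1))) := by
  obtain ⟨v, ⟨hpos, hcon⟩, hoptm⟩ := hopt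
  set e : EuclideanSpace ℝ (Fin (p + 1)) := EuclideanSpace.single 0 1 with he
  set v' : Fin n → EuclideanSpace ℝ (Fin (p + 1)) := fun i => (v i 0) • e with hv'
  have he0 : e 0 = 1 := by simp [he, EuclideanSpace.single_apply]
  have hv'0 : ∀ i, v' i 0 = v i 0 := by
    intro i; simp [hv', he0]
  -- key: projected constraint vectors
  have hx : ∀ j, (m j) • e + ∑ i, (M i j) • v' i
      = (((m j) • e + ∑ i, (M i j) • v i) 0) • e := by
    intro j
    have hsum : ∀ (u : Fin n → EuclideanSpace ℝ (Fin (p + 1))) (k : Fin (p + 1)),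
        (∑ i, u i) k = ∑ i, u i k := fun u k => by
          rw [WithLp.ofLp_sum]; exact Finset.sum_apply k Finset.univ _
    have : ((m j) • e + ∑ i, (M i j) • v i) 0 = m j + ∑ i, M i j * v i 0 := by
      rw [PiLp.add_apply, PiLp.smul_apply, he0, smul_eq_mul, mul_one,
        hsum (fun i => (M i j) • v i) 0]
      simp [PiLp.smul_apply]
    rw [this, add_smul]
    congr 1
    rw [Finset.sum_smul]
    refine Finset.sum_congr rfl fun i _ => ?_
    rw [hv', smul_smul]
  have hcon' : ∑ j, ‖(m j) • e + ∑ i, (M i j) • v' i‖ ^ 2 ≤ ρ ^ 2 := by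
    calc ∑ j, ‖(m j) • e + ∑ i, (M i j) • v' i‖ ^ 2
        ≤ ∑ j, ‖(m j) • e + ∑ i, (M i j) • v i‖ ^ 2 := by
          refine Finset.sum_le_sum fun j _ => ?_
          rw [hx j]
          exact proj_norm_sq_le _
      _ ≤ ρ ^ 2 := hcon
  refine ⟨v', ⟨fun i => by rw [hv'0]; exact hpos i, hcon'⟩, fun w hw => ?_, fun i => ⟨v i 0, rfl⟩⟩
  have := hoptm w hw
  calc 2 * ∑ i, c i * v' i 0 = 2 * ∑ i, c i * v i 0 := by
        congr 1; exact Finset.sum_congr rfl fun i _ => by rw [hv'0 i]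
    _ ≤ _ := this
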